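/- arXiv:1602.00266 — 4 statements merged into one kernel-verified Lean document; each statement's English description precedes it below -/
import Mathlib

section
/- Let G be a topological group, A a unital C*-algebra, and α a continuous action of G on A by *-automorphisms. Let K ⊆ G be a compact set, δ > 0 and 0 < ε < 2. If u ∈ U₀(A^α_{δ,K}) and v ∈ A is a unitary with ‖v − u‖ ≤ ε, then v ∈ U₀(A^α_{δ+2ε,K}). -/
open Filter Topology

lemma norm_exp_real_mul_I_sub_one (s : ℝ) :
    ‖Complex.exp ((s : ℂ) * Complex.I) - 1‖ = Real.sqrt (2 - 2 * Real.cos s) := by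
  rw [Complex.norm_def, Complex.normSq_apply]
  congr 1
  simp only [Complex.sub_re, Complex.sub_im, Complex.one_re, Complex.one_im,
    Complex.exp_ofReal_mul_I_re, Complex.exp_ofReal_mul_I_im]
  nlinarith [Real.sin_sq_add_cos_sq s]

lemma norm_exp_le_aux {θ t : ℝ} (hθ : |θ| ≤ Real.pi) (ht : |t| ≤ 1) :
    ‖Complex.exp (((t * θ : ℝ) : ℂ) * Complex.I) - 1‖ ≤
      ‖Complex.exp ((θ : ℂ) * Complex.I) - 1‖ := by
  rw [norm_exp_real_mul_I_sub_one, norm_exp_real_mul_I_sub_one]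
  apply Real.sqrt_le_sqrt
  have h1 : Real.cos θ ≤ Real.cos (t * θ) := by
    rw [← Real.cos_abs θ, ← Real.cos_abs (t * θ)]
    apply Real.cos_le_cos_of_nonneg_of_le_pi (abs_nonneg _) hθ
    calc |t * θ| = |t| * |θ| := abs_mul t θ
      _ ≤ 1 * |θ| := by gcongr
      _ = |θ| := one_mul _
  linarith

lemma exists_unitary_path {A : Type*} [CStarAlgebra A] [Nontrivial A] {ζ : A}
    (hζ : ζ ∈ unitary A) {ε : ℝ} (hε2 : ε < 2) (hd : ‖ζ - 1‖ ≤ ε) :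
    ∃ z : ℝ → A, Continuous z ∧ z 0 = 1 ∧ z 1 = ζ ∧
      (∀ t : ℝ, z t ∈ unitary A) ∧ (∀ t ∈ Set.Icc (0:ℝ) 1, ‖z t - 1‖ ≤ ε) := by
  have hε0 : 0 ≤ ε := le_trans (norm_nonneg _) hd
  haveI hN : IsStarNormal ζ :=
    ⟨show star ζ * ζ = ζ * star ζ by
      rw [(Unitary.mem_iff.mp hζ).1, (Unitary.mem_iff.mp hζ).2]⟩
  have hsp1 : ∀ x ∈ spectrum ℂ ζ, ‖x‖ = 1 := fun x hx => by
    have := spectrum.subset_circle_of_unitary hζ hx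
    rwa [mem_sphere_zero_iff_norm] at this
  have hsp0 : ∀ x ∈ spectrum ℂ ζ, x ≠ 0 := by
    intro x hx h
    have := hsp1 x hx
    rw [h] at this; simp at this
  have hsp2 : ∀ x ∈ spectrum ℂ ζ, ‖x - 1‖ ≤ ε := by
    intro x hx
    have hmem : x - 1 ∈ spectrum ℂ (ζ - algebraMap ℂ A 1) := by
      rw [← spectrum.sub_singleton_eq]
      exact Set.sub_mem_sub hx rfl
    rw [map_one] at hmem
    exact (spectrum.norm_le_norm_of_mem hmem).trans hd
  have hsp3 : ∀ x ∈ spectrum ℂ ζ, x ≠ -1 := by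
    intro x hx h
    have := hsp2 x hx
    rw [h] at this
    norm_num at this
    linarith
  have hslit : ∀ x ∈ spectrum ℂ ζ, x ∈ Complex.slitPlane := by
    intro x hx
    rw [Complex.mem_slitPlane_iff_arg]
    refine ⟨fun h => hsp3 x hx ?_, hsp0 x hx⟩
    have hx1 := Complex.norm_mul_exp_arg_mul_I x
    rw [h, hsp1 x hx] at hx1
    simpa [Complex.exp_pi_mul_I] using hx1.symm
  set f : ℝ → ℂ → ℂ := fun t x => Complex.exp ((t : ℂ) * Complex.log x) with hf
  have hflog : ∀ x ∈ spectrum ℂ ζ, Complex.log x = (Complex.arg x : ℂ) * Complex.I := by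
    intro x hx
    rw [Complex.log, hsp1 x hx, Real.log_one]
    simp
  have hfval : ∀ (t : ℝ), ∀ x ∈ spectrum ℂ ζ,
      f t x = Complex.exp (((t * Complex.arg x : ℝ) : ℂ) * Complex.I) := by
    intro t x hx
    rw [hf]
    simp only
    rw [hflog x hx]
    congr 1
    push_cast
    ring
  have hfcont : ∀ t : ℝ, ContinuousOn (f t) (spectrum ℂ ζ) := by
    intro t x hx
    exact (Complex.continuous_exp.continuousAt.comp
      (continuousAt_const.mul (continuousAt_clog (hslit x hx)))).continuousWithinAt
  set z : ℝ → A := fun t => cfc (f t) ζ with hz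
  have hzu : ∀ t : ℝ, z t ∈ unitary A := by
    intro t
    rw [hz]
    simp only
    rw [cfc_unitary_iff (f t) ζ hN (hfcont t)]
    intro x hx
    rw [hfval t x hx]
    have hstar : star (Complex.exp (((t * x.arg : ℝ) : ℂ) * Complex.I))
        = Complex.exp (-(((t * x.arg : ℝ) : ℂ) * Complex.I)) := by
      rw [Complex.star_def, ← Complex.exp_conj]
      congr 1
      simp [map_mul, Complex.conj_ofReal, Complex.conj_I]
    rw [hstar, ← Complex.exp_add]
    simp
  have hz0 : z 0 = 1 := by
    rw [hz]
    simp only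
    have : cfc (f 0) ζ = cfc (fun _ : ℂ => (1 : ℂ)) ζ :=
      cfc_congr fun x hx => by simp [hf]
    rw [this, cfc_const_one ℂ ζ]
  have hz1 : z 1 = ζ := by
    rw [hz]
    simp only
    have : cfc (f 1) ζ = cfc (id : ℂ → ℂ) ζ := by
      refine cfc_congr fun x hx => ?_
      simp only [hf, Complex.ofReal_one, one_mul, id]
      exact Complex.exp_log (hsp0 x hx)
    rw [this, cfc_id ℂ ζ]
  have hzb : ∀ t ∈ Set.Icc (0:ℝ) 1, ‖z t - 1‖ ≤ ε := by
    intro t ht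
    have h1 : z t - 1 = cfc (fun x => f t x - 1) ζ := by
      rw [hz]
      simp only
      rw [← cfc_const_one ℂ ζ, ← cfc_sub (f t) (fun _ => (1:ℂ)) ζ (hfcont t) continuousOn_const]
    rw [h1]
    apply norm_cfc_le hε0
    intro x hx
    rw [hfval t x hx]
    have ht1 : |t| ≤ 1 := abs_le.mpr ⟨by linarith [ht.1], ht.2⟩
    calc ‖Complex.exp (((t * x.arg : ℝ) : ℂ) * Complex.I) - 1‖
        ≤ ‖Complex.exp ((x.arg : ℂ) * Complex.I) - 1‖ :=
          norm_exp_le_aux (Complex.abs_arg_le_pi x) ht1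
      _ = ‖x - 1‖ := by
          congr 2
          have hx1 := Complex.norm_mul_exp_arg_mul_I x
          rw [hsp1 x hx] at hx1
          simpa using hx1
      _ ≤ ε := hsp2 x hx
  have hlip : ∀ s t : ℝ, ‖z t - z s‖ ≤ 2 * Real.pi * |t - s| := by
    intro s t
    have h1 : z t - z s = cfc (fun x => f t x - f s x) ζ := by
      rw [hz]
      simp only
      rw [cfc_sub (f t) (f s) ζ (hfcont t) (hfcont s)]
    rw [h1]
    apply norm_cfc_le (by positivity)
    intro x hx
    rw [hfval t x hx, hfval s x hx]
    set θ := x.arg with hθdef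
    have hθ : |θ| ≤ Real.pi := Complex.abs_arg_le_pi x
    have key : Complex.exp (((t * θ : ℝ) : ℂ) * Complex.I)
          - Complex.exp (((s * θ : ℝ) : ℂ) * Complex.I)
        = Complex.exp (((s * θ : ℝ) : ℂ) * Complex.I)
          * (Complex.exp ((((t - s) * θ : ℝ) : ℂ) * Complex.I) - 1) := by
      rw [mul_sub, mul_one, ← Complex.exp_add]
      congr 2
      push_cast
      ring
    rw [key, norm_mul, Complex.norm_exp_ofReal_mul_I,
      one_mul]
    have habs : ‖(((((t - s) * θ : ℝ) : ℂ) * Complex.I))‖ = |(t - s) * θ| := by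
      rw [norm_mul, Complex.norm_I, mul_one, Complex.norm_real, Real.norm_eq_abs]
    by_cases hc : |(t - s) * θ| ≤ 1
    · calc ‖Complex.exp ((((t - s) * θ : ℝ) : ℂ) * Complex.I) - 1‖
          ≤ 2 * ‖((((t - s) * θ : ℝ) : ℂ) * Complex.I)‖ := by
            exact Complex.norm_exp_sub_one_le (by rw [habs]; exact hc)
        _ = 2 * (|t - s| * |θ|) := by rw [habs, abs_mul]
        _ ≤ 2 * Real.pi * |t - s| := by nlinarith [abs_nonneg (t - s), abs_nonneg θ]
    · push_neg at hc
      rw [abs_mul] at hc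
      have h2 : ‖Complex.exp ((((t - s) * θ : ℝ) : ℂ) * Complex.I) - 1‖ ≤ 2 := by
        refine (norm_sub_le _ _).trans ?_
        rw [Complex.norm_exp_ofReal_mul_I, norm_one]
        norm_num
      nlinarith [abs_nonneg (t - s), abs_nonneg θ]
  have hzc : Continuous z := by
    have : LipschitzWith (Real.toNNReal (2 * Real.pi)) z := by
      apply LipschitzWith.of_dist_le_mul
      intro t s
      rw [dist_eq_norm, Real.dist_eq, Real.coe_toNNReal _ (by positivity)]
      exact hlip s t
    exact this.continuous
  exact ⟨z, hzc, hz0, hz1, hzu, hzb⟩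

/-- `u ∈ U₀(A^α_{ε,K})`: there is a norm-continuous path `w : [0,1] → U(A)` with
`w 0 = 1`, `w 1 = u`, and `‖α_g (w t) - w t‖ ≤ ε` for all `t ∈ [0,1]` and `g ∈ K`. -/
def UZero {G A : Type*} [TopologicalSpace G] [CStarAlgebra A]
    (α : G → A ≃⋆ₐ[ℂ] A) (ε : ℝ) (K : Set G) (u : A) : Prop :=
  ∃ w : ℝ → A, ContinuousOn w (Set.Icc 0 1) ∧ w 0 = 1 ∧ w 1 = u ∧
    (∀ t ∈ Set.Icc (0:ℝ) 1, w t ∈ unitary A) ∧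
    (∀ t ∈ Set.Icc (0:ℝ) 1, ∀ g ∈ K, ‖α g (w t) - w t‖ ≤ ε)

/-- If `u ∈ U₀(A^α_{δ,K})` and `v` is a unitary with `‖v - u‖ ≤ ε < 2`, then
`v ∈ U₀(A^α_{δ+2ε,K})`. -/
theorem stmt1 {G A : Type*} [Group G] [TopologicalSpace G] [IsTopologicalGroup G]
    [CStarAlgebra A]
    (α : G → A ≃⋆ₐ[ℂ] A)
    (hmul : ∀ g h : G, α (g * h) = (α h).trans (α g))
    (hcont : ∀ a : A, Continuous fun g => α g a)
    (K : Set G) (hK : IsCompact K)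
    (δ : ℝ) (hδ : 0 < δ) (ε : ℝ) (hε0 : 0 < ε) (hε2 : ε < 2)
    (u : A) (hu : u ∈ unitary A) (hu0 : UZero α δ K u)
    (v : A) (hv : v ∈ unitary A) (hvu : ‖v - u‖ ≤ ε) :
    UZero α (δ + 2 * ε) K v := by
  rcases subsingleton_or_nontrivial A with hS | hN
  · refine ⟨fun _ => 1, continuous_const.continuousOn, rfl, Subsingleton.elim _ _,
      fun t _ => one_mem _, fun t _ g _ => ?_⟩
    rw [map_one, sub_self, norm_zero]
    linarith
  obtain ⟨w, hwc, hw0, hw1, hwu, hwb⟩ := hu0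
  have hζu : v * star u ∈ unitary A := mul_mem hv (Unitary.star_mem hu)
  have hζd : ‖v * star u - 1‖ ≤ ε := by
    have h1 : v * star u - 1 = (v - u) * star u := by
      rw [sub_mul, (Unitary.mem_iff.mp hu).2]
    rw [h1]
    calc ‖(v - u) * star u‖ ≤ ‖v - u‖ * ‖star u‖ := norm_mul_le _ _
      _ = ‖v - u‖ := by
          rw [CStarRing.norm_of_mem_unitary (Unitary.star_mem hu), mul_one]
      _ ≤ ε := hvu
  obtain ⟨z, hzc, hz0, hz1, hzu, hzb⟩ := exists_unitary_path hζu hε2 hζd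
  refine ⟨fun t => z t * w t, hzc.continuousOn.mul hwc, ?_, ?_, ?_, ?_⟩
  · show z 0 * w 0 = 1
    rw [hz0, hw0, one_mul]
  · show z 1 * w 1 = v
    rw [hz1, hw1, mul_assoc, (Unitary.mem_iff.mp hu).1, mul_one]
  · exact fun t ht => mul_mem (hzu t) (hwu t ht)
  · intro t ht g hg
    have e1 : α g (z t * w t) - z t * w t
        = (α g (z t) - z t) * α g (w t) + z t * (α g (w t) - w t) := by
      rw [map_mul]
      noncomm_ring
    have hαwu : α g (w t) ∈ unitary A := by
      rw [Unitary.mem_iff]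
      constructor
      · rw [← map_star, ← map_mul, (Unitary.mem_iff.mp (hwu t ht)).1, map_one]
      · rw [← map_star, ← map_mul, (Unitary.mem_iff.mp (hwu t ht)).2, map_one]
    have hnw : ‖α g (w t)‖ = 1 := CStarRing.norm_of_mem_unitary hαwu
    have hnz : ‖z t‖ = 1 := CStarRing.norm_of_mem_unitary (hzu t)
    have hz2 : ‖α g (z t) - z t‖ ≤ 2 * ε := by
      have e2 : α g (z t) - z t = (α g (z t) - 1) + (1 - z t) := by abel
      calc ‖α g (z t) - z t‖ ≤ ‖α g (z t) - 1‖ + ‖1 - z t‖ := by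
            rw [e2]; exact norm_add_le _ _
        _ = ‖z t - 1‖ + ‖z t - 1‖ := by
            rw [norm_sub_rev 1 (z t)]
            congr 1
            calc ‖α g (z t) - 1‖ = ‖α g (z t - 1)‖ := by rw [map_sub, map_one]
              _ = ‖z t - 1‖ := StarAlgEquiv.norm_map (α g) _
        _ ≤ ε + ε := by
            have := hzb t ht
            linarith
        _ = 2 * ε := by ring
    calc ‖α g (z t * w t) - z t * w t‖
        ≤ ‖(α g (z t) - z t) * α g (w t)‖ + ‖z t * (α g (w t) - w t)‖ := by
          rw [e1]; exact norm_add_le _ _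
      _ ≤ ‖α g (z t) - z t‖ * ‖α g (w t)‖ + ‖z t‖ * ‖α g (w t) - w t‖ := by
          gcongr <;> exact norm_mul_le _ _
      _ ≤ 2 * ε + δ := by
          rw [hnw, hnz, mul_one, one_mul]
          exact add_le_add hz2 (hwb t ht g hg)
      _ = δ + 2 * ε := by ring
end

section
/- Let G be a second-countable, locally compact group, A a C*-algebra, and α a continuous action of G on A by *-automorphisms. Let (x_n)_{n∈ℕ} be a bounded sequence in A which defines a continuous element of the sequence algebra, i.e., for every g₀ ∈ G and ε > 0 there is a neighbourhood U of g₀ such that limsup_{n→∞} ‖α_g(x_n) − α_{g₀}(x_n)‖ ≤ ε for all g ∈ U. Then for every g₀ ∈ G and δ > 0 there exists an open neighbourhood U of g₀ such that sup_{k∈ℕ} sup_{g∈U} ‖α_g(x_k) − α_{g₀}(x_k)‖ ≤ δ. In particular, the map sending g to the bounded sequence (α_g(x_n))_n is continuous with respect to the supremum norm over n. -/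
open Filter Topology

/-- If a bounded sequence `(x_n)` in a C*-algebra with a continuous action `α` of a
second-countable locally compact group defines a continuous element of the sequence algebra,
then the continuity is automatically uniform over the whole sequence: for every `g₀` and
`δ > 0` there is an open neighbourhood `U` of `g₀` with
`sup_k sup_{g ∈ U} ‖α_g(x_k) - α_{g₀}(x_k)‖ ≤ δ`. In particular, `g ↦ (α_g(x_n))_n` is
continuous for the supremum norm over `n`. -/
theorem stmt2 {G A : Type*} [Group G] [TopologicalSpace G] [IsTopologicalGroup G]
    [SecondCountableTopology G] [LocallyCompactSpace G]
    [NonUnitalCStarAlgebra A]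
    (α : G → A ≃⋆ₐ[ℂ] A)
    (hmul : ∀ g h : G, α (g * h) = (α h).trans (α g))
    (hcont : ∀ a : A, Continuous fun g => α g a)
    (x : ℕ → A) (hbdd : ∃ C : ℝ, ∀ n, ‖x n‖ ≤ C)
    (hx : ∀ g₀ : G, ∀ ε > (0 : ℝ), ∃ U ∈ nhds g₀, ∀ g ∈ U,
      Filter.limsup (fun n => ‖α g (x n) - α g₀ (x n)‖) Filter.atTop ≤ ε) :
    (∀ g₀ : G, ∀ δ > (0 : ℝ), ∃ U : Set G, IsOpen U ∧ g₀ ∈ U ∧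
      ∀ k : ℕ, ∀ g ∈ U, ‖α g (x k) - α g₀ (x k)‖ ≤ δ) ∧
    (∀ g₀ : G, Filter.Tendsto (fun g => ⨆ k : ℕ, ‖α g (x k) - α g₀ (x k)‖)
      (nhds g₀) (nhds 0)) := by
  obtain ⟨C, hC⟩ := hbdd
  -- every `α h` is isometric
  have hnorm : ∀ (h : G) (a : A), ‖α h a‖ = ‖a‖ := fun h a =>
    NonUnitalStarAlgHom.norm_map (α h) (α h).injective a
  -- the key uniform statement
  have key : ∀ g₀ : G, ∀ δ > (0 : ℝ), ∃ U : Set G, IsOpen U ∧ g₀ ∈ U ∧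
      ∀ k : ℕ, ∀ g ∈ U, ‖α g (x k) - α g₀ (x k)‖ ≤ δ := by
    intro g₀ δ hδ
    obtain ⟨U, hU, hUls⟩ := hx g₀ (δ / 4) (by linarith)
    obtain ⟨V, hVU, hVopen, hgV⟩ := mem_nhds_iff.mp hU
    set F : ℕ → Set G := fun m => {g | ∀ n, m ≤ n → ‖α g (x n) - α g₀ (x n)‖ ≤ δ / 2} with hF
    have hFclosed : ∀ m, IsClosed (F m) := by
      intro m
      have : F m = ⋂ n, {g | m ≤ n → ‖α g (x n) - α g₀ (x n)‖ ≤ δ / 2} := by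
        ext g; simp [hF, Set.mem_iInter]
      rw [this]
      refine isClosed_iInter fun n => ?_
      by_cases hn : m ≤ n
      · have : {g | m ≤ n → ‖α g (x n) - α g₀ (x n)‖ ≤ δ / 2}
            = {g | ‖α g (x n) - α g₀ (x n)‖ ≤ δ / 2} := by
          ext g; simp [hn]
        rw [this]
        exact isClosed_le (Continuous.norm ((hcont (x n)).sub continuous_const)) continuous_const
      · have : {g | m ≤ n → ‖α g (x n) - α g₀ (x n)‖ ≤ δ / 2} = Set.univ := by
          ext g; simp [hn]
        rw [this]; exact isClosed_univ
    -- the sets `F m ∪ Vᶜ` are closed and cover `G`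
    have hcover : ⋃ m, (F m ∪ Vᶜ) = Set.univ := by
      refine Set.eq_univ_of_forall fun g => ?_
      by_cases hg : g ∈ V
      · have hls := hUls g (hVU hg)
        have hbd : Filter.IsBoundedUnder (· ≤ ·) Filter.atTop
            (fun n => ‖α g (x n) - α g₀ (x n)‖) := by
          refine Filter.isBoundedUnder_of ⟨C + C, fun (n : ℕ) => ?_⟩
          calc ‖α g (x n) - α g₀ (x n)‖ ≤ ‖α g (x n)‖ + ‖α g₀ (x n)‖ := norm_sub_le _ _
            _ ≤ C + C := by rw [hnorm, hnorm]; exact add_le_add (hC n) (hC n)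
        have hlt : Filter.limsup (fun n => ‖α g (x n) - α g₀ (x n)‖) Filter.atTop < δ / 2 :=
          lt_of_le_of_lt hls (by linarith)
        have := Filter.eventually_lt_of_limsup_lt hlt hbd
        obtain ⟨m, hm⟩ := Filter.eventually_atTop.mp this
        exact Set.mem_iUnion.mpr ⟨m, Or.inl fun n hn => (hm n hn).le⟩
      · exact Set.mem_iUnion.mpr ⟨0, Or.inr hg⟩
    have hdense := dense_iUnion_interior_of_closed
      (fun m => (hFclosed m).union hVopen.isClosed_compl) hcover
    obtain ⟨g₁, hg₁V, hg₁i⟩ := hdense.inter_open_nonempty V hVopen ⟨g₀, hgV⟩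
    obtain ⟨m, hg₁m⟩ := Set.mem_iUnion.mp hg₁i
    -- `W` : open neighbourhood of `g₁` contained in `F m`
    set W : Set G := interior (F m ∪ Vᶜ) ∩ V with hW
    have hWopen : IsOpen W := isOpen_interior.inter hVopen
    have hg₁W : g₁ ∈ W := ⟨hg₁m, hg₁V⟩
    have hWF : W ⊆ F m := by
      rintro w ⟨hw1, hw2⟩
      rcases interior_subset hw1 with h | h
      · exact h
      · exact absurd hw2 h
    have hg₁F : g₁ ∈ F m := hWF hg₁W
    -- the final neighbourhood
    set U₀ : Set G := ((fun g => g₁ * g₀⁻¹ * g) ⁻¹' W) ∩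
      (⋂ n ∈ Finset.range m, {g | ‖α g (x n) - α g₀ (x n)‖ < δ}) with hU₀
    have hcontmul : Continuous fun g : G => g₁ * g₀⁻¹ * g := continuous_const.mul continuous_id
    have hU₀open : IsOpen U₀ := by
      refine (hWopen.preimage hcontmul).inter (isOpen_biInter_finset fun n _ => ?_)
      exact isOpen_lt (Continuous.norm ((hcont (x n)).sub continuous_const)) continuous_const
    have hg₀U₀ : g₀ ∈ U₀ := by
      constructor
      · show g₁ * g₀⁻¹ * g₀ ∈ W
        simpa using hg₁W
      · refine Set.mem_iInter₂.mpr fun n _ => ?_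
        simp [hδ]
    refine ⟨U₀, hU₀open, hg₀U₀, fun k g hg => ?_⟩
    obtain ⟨hg1, hg2⟩ := hg
    by_cases hk : k < m
    · exact (Set.mem_iInter₂.mp hg2 k (Finset.mem_range.mpr hk)).le
    · push_neg at hk
      have h1 : ‖α (g₁ * g₀⁻¹ * g) (x k) - α g₀ (x k)‖ ≤ δ / 2 := hWF hg1 k hk
      have h2 : ‖α g₁ (x k) - α g₀ (x k)‖ ≤ δ / 2 := hg₁F k hk
      have e1 : α (g₁ * g₀⁻¹ * g) (x k) = α (g₁ * g₀⁻¹) (α g (x k)) := by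
        rw [hmul (g₁ * g₀⁻¹) g]; rfl
      have e2 : α g₁ (x k) = α (g₁ * g₀⁻¹) (α g₀ (x k)) := by
        have h' := hmul (g₁ * g₀⁻¹) g₀
        rw [show g₁ * g₀⁻¹ * g₀ = g₁ by group] at h'
        rw [h']; rfl
      have e3 : ‖α g (x k) - α g₀ (x k)‖
          = ‖α (g₁ * g₀⁻¹ * g) (x k) - α g₁ (x k)‖ := by
        rw [e1, e2, ← map_sub, hnorm]
      rw [e3]
      calc ‖α (g₁ * g₀⁻¹ * g) (x k) - α g₁ (x k)‖
          ≤ ‖α (g₁ * g₀⁻¹ * g) (x k) - α g₀ (x k)‖ + ‖α g₀ (x k) - α g₁ (x k)‖ :=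
            norm_sub_le_norm_sub_add_norm_sub _ _ _
        _ ≤ δ / 2 + δ / 2 := add_le_add h1 (by rwa [norm_sub_rev])
        _ = δ := by ring
  refine ⟨key, fun g₀ => ?_⟩
  have hbdd' : ∀ g : G, BddAbove (Set.range fun k => ‖α g (x k) - α g₀ (x k)‖) := by
    intro g
    refine ⟨C + C, ?_⟩
    rintro _ ⟨k, rfl⟩
    calc ‖α g (x k) - α g₀ (x k)‖ ≤ ‖α g (x k)‖ + ‖α g₀ (x k)‖ := norm_sub_le _ _
      _ ≤ C + C := by rw [hnorm, hnorm]; exact add_le_add (hC k) (hC k)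
  rw [Metric.tendsto_nhds]
  intro ε hε
  obtain ⟨U, hUopen, hgU, hUb⟩ := key g₀ (ε / 2) (by linarith)
  filter_upwards [hUopen.mem_nhds hgU] with g hg
  have hle : (⨆ k : ℕ, ‖α g (x k) - α g₀ (x k)‖) ≤ ε / 2 :=
    ciSup_le fun k => hUb k g hg
  have hge : (0 : ℝ) ≤ ⨆ k : ℕ, ‖α g (x k) - α g₀ (x k)‖ :=
    le_trans (norm_nonneg _) (le_ciSup (hbdd' g) 0)
  rw [Real.dist_eq, sub_zero, abs_of_nonneg hge]
  linarith
end

section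
/- Let A be a σ-unital C*-algebra and J ⊆ A a closed two-sided ideal. Let (h_n)_{n∈ℕ} be a sequence of positive contractions in J which is an approximate unit for J (i.e., ‖x − h_n x‖ → 0 for all x ∈ J) and which is quasicentral relative to A (i.e., ‖h_n a − a h_n‖ → 0 for all a ∈ A). Let (a_n)_{n∈ℕ} be a sequence of positive contractions in A such that their images form an approximate unit of A/J, i.e., the distance dist(b − a_n b, J) → 0 for every b ∈ A. Then there is a strictly increasing sequence n_1 < n_2 < … of natural numbers such that the sequence e_k := h_{n_k} + (1 − h_{n_k})^{1/2} a_k (1 − h_{n_k})^{1/2} is an approximate unit for A, i.e., ‖b − e_k b‖ → 0 for every b ∈ A. Here (1 − h)^{1/2} a (1 − h)^{1/2} is computed in the minimal unitization of A; equivalently, e_k = h_{n_k} + a_k − s_k a_k − a_k s_k + s_k a_k s_k ∈ A, where s_k := f(h_{n_k}) ∈ A is obtained by applying the continuous functional calculus with the function f(t) = 1 − √(1 − t) (which vanishes at 0) to the positive contraction h_{n_k}. -/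
open Filter Topology

section Aux

lemma stmt7_pow_comm_bound {B : Type*} [NormedRing B] [NormOneClass B] (x b : B) (hx : ‖x‖ ≤ 1) :
    ∀ i : ℕ, ‖x^i * b - b * x^i‖ ≤ i * ‖x * b - b * x‖ := by
  intro i
  induction i with
  | zero => simp
  | succ i ih =>
    have key : x^(i+1) * b - b * x^(i+1) = x * (x^i * b - b * x^i) + (x * b - b * x) * x^i := by
      rw [pow_succ']
      noncomm_ring
    have hxi : ‖x^i‖ ≤ 1 := le_trans (norm_pow_le x i) (pow_le_one₀ (norm_nonneg x) hx)
    have h1 : ‖x^(i+1) * b - b * x^(i+1)‖ ≤ ‖x‖ * ‖x^i * b - b * x^i‖ + ‖x * b - b * x‖ * ‖x^i‖ :=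
      key ▸ (norm_add_le _ _).trans (add_le_add (norm_mul_le _ _) (norm_mul_le _ _))
    have h2 : (0:ℝ) ≤ ‖x * b - b * x‖ := norm_nonneg _
    have h3 : (0:ℝ) ≤ ‖x‖ := norm_nonneg _
    have h4 : (0:ℝ) ≤ ‖x^i * b - b * x^i‖ := norm_nonneg _
    push_cast
    nlinarith [ih]

lemma stmt7_poly_comm_bound (p : Polynomial ℝ) {B : Type*} [NormedRing B] [NormOneClass B]
    [NormedAlgebra ℝ B] :
    ∃ C : ℝ, 0 ≤ C ∧ ∀ x b : B, ‖x‖ ≤ 1 →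
      ‖(Polynomial.aeval x p) * b - b * (Polynomial.aeval x p)‖ ≤ C * ‖x * b - b * x‖ := by
  induction p using Polynomial.induction_on' with
  | add q r hq hr =>
    obtain ⟨C₁, hC₁, h₁⟩ := hq
    obtain ⟨C₂, hC₂, h₂⟩ := hr
    refine ⟨C₁ + C₂, by positivity, fun x b hx => ?_⟩
    have := h₁ x b hx
    have := h₂ x b hx
    have hkey : (Polynomial.aeval x (q + r)) * b - b * (Polynomial.aeval x (q + r))
        = ((Polynomial.aeval x q) * b - b * (Polynomial.aeval x q))
          + ((Polynomial.aeval x r) * b - b * (Polynomial.aeval x r)) := by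
      rw [map_add]; noncomm_ring
    rw [hkey]
    calc _ ≤ ‖(Polynomial.aeval x q) * b - b * (Polynomial.aeval x q)‖
          + ‖(Polynomial.aeval x r) * b - b * (Polynomial.aeval x r)‖ := norm_add_le _ _
    _ ≤ (C₁ + C₂) * ‖x * b - b * x‖ := by rw [add_mul]; gcongr
  | monomial n r =>
    refine ⟨|r| * n, by positivity, fun x b hx => ?_⟩
    have hkey : (Polynomial.aeval x (Polynomial.monomial n r)) * b
        - b * (Polynomial.aeval x (Polynomial.monomial n r))
        = algebraMap ℝ B r * (x^n * b - b * x^n) := by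
      rw [Polynomial.aeval_monomial]
      have hc : b * algebraMap ℝ B r = algebraMap ℝ B r * b := (Algebra.commutes r b).symm
      rw [mul_sub, mul_assoc, ← mul_assoc b, hc, mul_assoc]
    rw [hkey]
    calc _ ≤ ‖algebraMap ℝ B r‖ * ‖x^n * b - b * x^n‖ := norm_mul_le _ _
    _ ≤ |r| * (n * ‖x * b - b * x‖) := by
        gcongr
        · exact le_of_eq (by rw [norm_algebraMap', Real.norm_eq_abs])
        · exact stmt7_pow_comm_bound x b hx n
    _ = |r| * n * ‖x * b - b * x‖ := by ring

lemma stmt7_qc_cfc {B : Type*} [CStarAlgebra B] [NormOneClass B] (f : ℝ → ℝ) (hf : Continuous f)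
    (H : ℕ → B) (hsa : ∀ n, IsSelfAdjoint (H n)) (hsp : ∀ n, spectrum ℝ (H n) ⊆ Set.Icc 0 1)
    (hn1 : ∀ n, ‖H n‖ ≤ 1) (b : B)
    (hqc : Tendsto (fun n => ‖H n * b - b * H n‖) atTop (nhds 0)) :
    Tendsto (fun n => ‖cfc f (H n) * b - b * cfc f (H n)‖) atTop (nhds 0) := by
  rw [Metric.tendsto_atTop]
  intro ε hε
  set δ : ℝ := ε / (8 * (‖b‖ + 1)) with hδdef
  have hδ : 0 < δ := by positivity
  obtain ⟨p, hp⟩ := exists_polynomial_near_of_continuousOn 0 1 f hf.continuousOn δ hδ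
  obtain ⟨C, hC0, hC⟩ := stmt7_poly_comm_bound p (B := B)
  have hqc' := (Metric.tendsto_atTop.mp hqc) (ε / (2 * (C + 1))) (by positivity)
  obtain ⟨N, hN⟩ := hqc'
  refine ⟨N, fun n hn => ?_⟩
  have hcomm := hN n hn
  rw [Real.dist_eq, sub_zero, abs_of_nonneg (norm_nonneg _)] at hcomm ⊢
  have hsub : cfc f (H n) - Polynomial.aeval (H n) p = cfc (fun t => f t - p.eval t) (H n) := by
    rw [cfc_sub _ _ _ (hf.continuousOn) ((Polynomial.continuous p).continuousOn),
      cfc_polynomial p (H n)]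
  have hSP : ‖cfc f (H n) - Polynomial.aeval (H n) p‖ ≤ δ := by
    rw [hsub]
    apply norm_cfc_le hδ.le
    intro t ht
    have := hp t (hsp n ht)
    rw [Real.norm_eq_abs, abs_sub_comm]
    exact this.le
  set S := cfc f (H n)
  set P := (Polynomial.aeval (H n) p : B)
  have hPb : ‖P * b - b * P‖ ≤ C * ‖H n * b - b * H n‖ := hC (H n) b (hn1 n)
  have key : S * b - b * S = (S - P) * b - b * (S - P) + (P * b - b * P) := by noncomm_ring
  have est : ‖S * b - b * S‖ ≤ ‖S - P‖ * ‖b‖ + ‖b‖ * ‖S - P‖ + C * ‖H n * b - b * H n‖ := by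
    rw [key]
    calc _ ≤ ‖(S - P) * b - b * (S - P)‖ + ‖P * b - b * P‖ := norm_add_le _ _
    _ ≤ (‖(S - P) * b‖ + ‖b * (S - P)‖) + (C * ‖H n * b - b * H n‖) :=
        add_le_add (norm_sub_le _ _) hPb
    _ ≤ _ := by gcongr <;> exact norm_mul_le _ _
  have h1 : ‖S - P‖ * ‖b‖ ≤ δ * ‖b‖ := by gcongr
  have h2 : C * ‖H n * b - b * H n‖ ≤ C * (ε / (2 * (C + 1))) :=
    mul_le_mul_of_nonneg_left hcomm.le hC0
  have hb0 : (0:ℝ) ≤ ‖b‖ := norm_nonneg _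
  have hfinal : δ * ‖b‖ + ‖b‖ * δ + C * (ε / (2 * (C + 1))) < ε := by
    rw [hδdef]
    have e1 : ε / (8 * (‖b‖ + 1)) * ‖b‖ ≤ ε/8 := by
      rw [div_mul_eq_mul_div, div_le_div_iff₀ (by positivity) (by norm_num)]
      nlinarith
    have e2 : C * (ε / (2 * (C + 1))) ≤ ε/2 := by
      rw [mul_div_assoc'] at *
      rw [div_le_div_iff₀ (by positivity) (by norm_num)]
      nlinarith
    nlinarith [mul_comm ‖b‖ (ε / (8 * (‖b‖ + 1))), hε]
  calc ‖S * b - b * S‖ ≤ _ := est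
  _ ≤ δ * ‖b‖ + ‖b‖ * δ + C * (ε / (2 * (C + 1))) := by gcongr
  _ < ε := hfinal

variable {A : Type*} [NonUnitalCStarAlgebra A] [PartialOrder A] [StarOrderedRing A]

local notation "𝔣" => (fun t : ℝ => 1 - Real.sqrt (1 - t))

lemma stmt7_spec01 (x : A) (hx : 0 ≤ x) (hx1 : ‖x‖ ≤ 1) :
    spectrum ℝ (x : Unitization ℂ A) ⊆ Set.Icc 0 1 := by
  intro t ht
  refine ⟨spectrum_nonneg_of_nonneg (Unitization.inr_nonneg_iff.mpr hx) ht, ?_⟩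
  have := spectrum.norm_le_norm_of_mem ht
  rw [Unitization.norm_inr] at this
  exact le_trans (le_abs_self t) (this.trans hx1)

lemma stmt7_oneSub (x y : A) (hx0 : 0 ≤ x) (hx1 : ‖x‖ ≤ 1) (hy0 : 0 ≤ y) (hy1 : ‖y‖ ≤ 1) :
    ∃ G : Unitization ℂ A, IsSelfAdjoint G ∧ ‖G‖ ≤ 1 ∧
      G * G = 1 - (x : Unitization ℂ A) ∧
      ((cfcₙ 𝔣 x : A) : Unitization ℂ A) = 1 - G ∧
      (1 : Unitization ℂ A) - ((x + y - cfcₙ 𝔣 x * y - y * cfcₙ 𝔣 x + cfcₙ 𝔣 x * y * cfcₙ 𝔣 x : A) :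
        Unitization ℂ A) = G * ((1 : Unitization ℂ A) - (y : Unitization ℂ A)) * G ∧
      ‖(1 : Unitization ℂ A) -
        ((x + y - cfcₙ 𝔣 x * y - y * cfcₙ 𝔣 x + cfcₙ 𝔣 x * y * cfcₙ 𝔣 x : A) : Unitization ℂ A)‖ ≤ 1 := by
  set B := Unitization ℂ A
  have hg : Continuous fun t : ℝ => Real.sqrt (1 - t) :=
    Real.continuous_sqrt.comp (by continuity)
  have hH : IsSelfAdjoint (x : B) := .of_nonneg (Unitization.inr_nonneg_iff.mpr hx0)
  have hsp := stmt7_spec01 x hx0 hx1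
  set G : B := cfc (fun t : ℝ => Real.sqrt (1 - t)) (x : B) with hGdef
  have hGsa : IsSelfAdjoint G := cfc_predicate _ _
  have hGnorm : ‖G‖ ≤ 1 := by
    apply norm_cfc_le one_pos.le
    intro t ht
    obtain ⟨h0, h1⟩ := hsp ht
    rw [Real.norm_eq_abs, abs_of_nonneg (Real.sqrt_nonneg _)]
    calc Real.sqrt (1 - t) ≤ Real.sqrt 1 := Real.sqrt_le_sqrt (by linarith)
    _ = 1 := Real.sqrt_one
  have hGG : G * G = 1 - (x : B) := by
    rw [hGdef, ← cfc_mul _ _ _ hg.continuousOn hg.continuousOn]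
    have : cfc (fun t : ℝ => Real.sqrt (1 - t) * Real.sqrt (1 - t)) (x : B)
        = cfc (fun t : ℝ => 1 - t) (x : B) := by
      apply cfc_congr
      intro t ht
      exact Real.mul_self_sqrt (by linarith [(hsp ht).2])
    rw [this, cfc_sub _ _ _ (by fun_prop) (by fun_prop), cfc_const 1 (x : B), cfc_id' ℝ (x : B),
      map_one]
  have hS : ((cfcₙ 𝔣 x : A) : B) = 1 - G := by
    rw [Unitization.real_cfcₙ_eq_cfc_inr x _ (by simp), hGdef,
      cfc_sub _ _ _ (by fun_prop) hg.continuousOn, cfc_const 1 (x : B), map_one]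
  have hmain : (1 : B) - ((x + y - cfcₙ 𝔣 x * y - y * cfcₙ 𝔣 x + cfcₙ 𝔣 x * y * cfcₙ 𝔣 x : A) : B)
      = G * ((1 : B) - (y : B)) * G := by
    have hE : ((x + y - cfcₙ 𝔣 x * y - y * cfcₙ 𝔣 x + cfcₙ 𝔣 x * y * cfcₙ 𝔣 x : A) : B)
        = (x : B) + G * (y : B) * G := by
      push_cast [Unitization.inr_add, Unitization.inr_sub, Unitization.inr_mul]
      rw [hS]
      noncomm_ring
    have hx' : (x : B) = 1 - G * G := by rw [hGG, sub_sub_cancel]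
    rw [hE, hx']
    rw [mul_sub, sub_mul, mul_one]
    abel
  refine ⟨G, hGsa, hGnorm, hGG, hS, hmain, ?_⟩
  rw [hmain]
  have hY := (CStarAlgebra.inr_mem_Icc_iff_norm_le (x := y)).mpr ⟨hy0, hy1⟩
  obtain ⟨hY0, hY1⟩ := Set.mem_Icc.mp hY
  have h1Y : ‖(1 : B) - (y : B)‖ ≤ 1 := by
    have h0 : (0 : B) ≤ 1 - (y : B) := sub_nonneg.mpr hY1
    have h1 : (1 : B) - (y : B) ≤ 1 := sub_le_self 1 hY0
    exact (CStarAlgebra.norm_le_one_iff_of_nonneg _ h0).mpr h1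
  calc ‖G * ((1 : B) - (y : B)) * G‖ ≤ ‖G * ((1 : B) - (y : B))‖ * ‖G‖ := norm_mul_le _ _
  _ ≤ ‖G‖ * ‖(1 : B) - (y : B)‖ * ‖G‖ := by gcongr; exact norm_mul_le _ _
  _ ≤ 1 * 1 * 1 := by gcongr
  _ = 1 := by norm_num

lemma stmt7_est2 (x y b w : A) (hx0 : 0 ≤ x) (hx1 : ‖x‖ ≤ 1) (hy0 : 0 ≤ y) (hy1 : ‖y‖ ≤ 1) :
    ‖b - (x + y - cfcₙ 𝔣 x * y - y * cfcₙ 𝔣 x + cfcₙ 𝔣 x * y * cfcₙ 𝔣 x) * b‖ ≤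
      ‖b - w * b‖ + ‖w - (x + y - cfcₙ 𝔣 x * y - y * cfcₙ 𝔣 x + cfcₙ 𝔣 x * y * cfcₙ 𝔣 x) * w‖ * ‖b‖ := by
  obtain ⟨G, hGsa, hGnorm, hGG, hS, hmain, h1E⟩ := stmt7_oneSub x y hx0 hx1 hy0 hy1
  set E : A := x + y - cfcₙ 𝔣 x * y - y * cfcₙ 𝔣 x + cfcₙ 𝔣 x * y * cfcₙ 𝔣 x with hEdef
  have hsplit : ((b - E * b : A) : Unitization ℂ A)
      = (1 - (E : Unitization ℂ A)) * ((b - w * b : A) : Unitization ℂ A)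
        + ((w - E * w : A) : Unitization ℂ A) * (b : Unitization ℂ A) := by
    simp only [Unitization.inr_sub, Unitization.inr_mul]
    noncomm_ring
  calc ‖b - E * b‖ = ‖((b - E * b : A) : Unitization ℂ A)‖ := (Unitization.norm_inr _).symm
  _ ≤ ‖(1 - (E : Unitization ℂ A)) * ((b - w * b : A) : Unitization ℂ A)‖
      + ‖((w - E * w : A) : Unitization ℂ A) * (b : Unitization ℂ A)‖ := by
    rw [hsplit]; exact norm_add_le _ _
  _ ≤ ‖1 - (E : Unitization ℂ A)‖ * ‖((b - w * b : A) : Unitization ℂ A)‖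
      + ‖((w - E * w : A) : Unitization ℂ A)‖ * ‖(b : Unitization ℂ A)‖ :=
    add_le_add (norm_mul_le _ _) (norm_mul_le _ _)
  _ ≤ 1 * ‖((b - w * b : A) : Unitization ℂ A)‖
      + ‖((w - E * w : A) : Unitization ℂ A)‖ * ‖(b : Unitization ℂ A)‖ := by gcongr
  _ = ‖b - w * b‖ + ‖w - E * w‖ * ‖b‖ := by
    rw [one_mul, Unitization.norm_inr, Unitization.norm_inr, Unitization.norm_inr]

lemma stmt7_est1 (x y b j : A) (hx0 : 0 ≤ x) (hx1 : ‖x‖ ≤ 1) (hy0 : 0 ≤ y) (hy1 : ‖y‖ ≤ 1) :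
    ‖b - (x + y - cfcₙ 𝔣 x * y - y * cfcₙ 𝔣 x + cfcₙ 𝔣 x * y * cfcₙ 𝔣 x) * b‖ ≤
      ‖(b - y * b) - j‖ + Real.sqrt (‖j - j * x‖ * ‖j‖) + ‖cfcₙ 𝔣 x * b - b * cfcₙ 𝔣 x‖ := by
  obtain ⟨G, hGsa, hGnorm, hGG, hS, hmain, h1E⟩ := stmt7_oneSub x y hx0 hx1 hy0 hy1
  set E : A := x + y - cfcₙ 𝔣 x * y - y * cfcₙ 𝔣 x + cfcₙ 𝔣 x * y * cfcₙ 𝔣 x with hEdef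
  set s : A := cfcₙ 𝔣 x with hsdef
  have hY : ‖(1 : Unitization ℂ A) - (y : Unitization ℂ A)‖ ≤ 1 := by
    have hYm := (CStarAlgebra.inr_mem_Icc_iff_norm_le (x := y)).mpr ⟨hy0, hy1⟩
    obtain ⟨hY0, hY1⟩ := Set.mem_Icc.mp hYm
    exact (CStarAlgebra.norm_le_one_iff_of_nonneg _ (sub_nonneg.mpr hY1)).mpr (sub_le_self 1 hY0)
  have hGb : ‖G * (b : Unitization ℂ A) - (b : Unitization ℂ A) * G‖ = ‖s * b - b * s‖ := by
    have hG' : G = 1 - ((s : A) : Unitization ℂ A) := by rw [hS, sub_sub_cancel]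
    have heq : G * (b : Unitization ℂ A) - (b : Unitization ℂ A) * G
        = ((b * s - s * b : A) : Unitization ℂ A) := by
      rw [hG']
      simp only [Unitization.inr_sub, Unitization.inr_mul]
      noncomm_ring
    rw [heq, Unitization.norm_inr, norm_sub_rev]
  have hjG : ‖(j : Unitization ℂ A) * G‖ ≤ Real.sqrt (‖j - j * x‖ * ‖j‖) := by
    have h1 : ‖(j : Unitization ℂ A) * G‖ * ‖(j : Unitization ℂ A) * G‖
        = ‖((j : Unitization ℂ A) * G) * star ((j : Unitization ℂ A) * G)‖ :=
      CStarRing.norm_self_mul_star.symm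
    have h2 : ((j : Unitization ℂ A) * G) * star ((j : Unitization ℂ A) * G)
        = (((j - j * x) * star j : A) : Unitization ℂ A) := by
      rw [star_mul, hGsa.star_eq, show ((j : Unitization ℂ A) * G) * (G * star (j : Unitization ℂ A))
        = (j : Unitization ℂ A) * (G * G) * star (j : Unitization ℂ A) by noncomm_ring, hGG,
        ← Unitization.inr_star]
      simp only [Unitization.inr_sub, Unitization.inr_mul]
      noncomm_ring
    have h3 : ‖((j - j * x) * star j : A)‖ ≤ ‖j - j * x‖ * ‖j‖ :=
      (norm_mul_le _ _).trans (by rw [norm_star])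
    rw [← Real.sqrt_mul_self (norm_nonneg ((j : Unitization ℂ A) * G))]
    apply Real.sqrt_le_sqrt
    rw [h1, h2, Unitization.norm_inr]
    exact h3
  have hstart : ((b - E * b : A) : Unitization ℂ A)
      = G * (((1 : Unitization ℂ A) - (y : Unitization ℂ A)) * (G * (b : Unitization ℂ A))) := by
    rw [Unitization.inr_sub, Unitization.inr_mul, show ((b : Unitization ℂ A)
      - (E : Unitization ℂ A) * (b : Unitization ℂ A))
      = ((1 : Unitization ℂ A) - (E : Unitization ℂ A)) * (b : Unitization ℂ A) by noncomm_ring,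
      hmain]
    noncomm_ring
  have hsplit2 : ((1 : Unitization ℂ A) - (y : Unitization ℂ A)) * (G * (b : Unitization ℂ A))
      = ((1 : Unitization ℂ A) - (y : Unitization ℂ A)) * ((b : Unitization ℂ A) * G)
        + ((1 : Unitization ℂ A) - (y : Unitization ℂ A))
          * (G * (b : Unitization ℂ A) - (b : Unitization ℂ A) * G) := by
    noncomm_ring
  have hsplit3 : ((1 : Unitization ℂ A) - (y : Unitization ℂ A)) * ((b : Unitization ℂ A) * G)
      = (((b - y * b) - j : A) : Unitization ℂ A) * G + (j : Unitization ℂ A) * G := by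
    simp only [Unitization.inr_sub, Unitization.inr_mul]
    noncomm_ring
  calc ‖b - E * b‖ = ‖((b - E * b : A) : Unitization ℂ A)‖ := (Unitization.norm_inr _).symm
  _ ≤ ‖G‖ * ‖((1 : Unitization ℂ A) - (y : Unitization ℂ A)) * (G * (b : Unitization ℂ A))‖ := by
    rw [hstart]; exact norm_mul_le _ _
  _ ≤ 1 * ‖((1 : Unitization ℂ A) - (y : Unitization ℂ A)) * (G * (b : Unitization ℂ A))‖ :=
    mul_le_mul_of_nonneg_right hGnorm (norm_nonneg _)
  _ = ‖((1 : Unitization ℂ A) - (y : Unitization ℂ A)) * (G * (b : Unitization ℂ A))‖ := one_mul _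
  _ ≤ ‖((1 : Unitization ℂ A) - (y : Unitization ℂ A)) * ((b : Unitization ℂ A) * G)‖
      + ‖(1 : Unitization ℂ A) - (y : Unitization ℂ A)‖
        * ‖G * (b : Unitization ℂ A) - (b : Unitization ℂ A) * G‖ := by
    rw [hsplit2]
    exact (norm_add_le _ _).trans (add_le_add le_rfl (norm_mul_le _ _))
  _ ≤ (‖(((b - y * b) - j : A) : Unitization ℂ A) * G‖ + ‖(j : Unitization ℂ A) * G‖)
      + 1 * ‖G * (b : Unitization ℂ A) - (b : Unitization ℂ A) * G‖ := by
    rw [hsplit3]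
    exact add_le_add (norm_add_le _ _) (mul_le_mul_of_nonneg_right hY (norm_nonneg _))
  _ ≤ (‖(((b - y * b) - j : A) : Unitization ℂ A)‖ * ‖G‖ + Real.sqrt (‖j - j * x‖ * ‖j‖))
      + ‖s * b - b * s‖ := by
    rw [one_mul, hGb]
    exact add_le_add (add_le_add (norm_mul_le _ _) hjG) le_rfl
  _ ≤ (‖(b - y * b) - j‖ * 1 + Real.sqrt (‖j - j * x‖ * ‖j‖)) + ‖s * b - b * s‖ := by
    rw [Unitization.norm_inr]
    exact add_le_add (add_le_add (mul_le_mul_of_nonneg_left hGnorm (norm_nonneg _)) le_rfl) le_rfl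
  _ = ‖(b - y * b) - j‖ + Real.sqrt (‖j - j * x‖ * ‖j‖) + ‖s * b - b * s‖ := by ring

end Aux

section Main

variable {A : Type*} [NonUnitalCStarAlgebra A] [PartialOrder A] [StarOrderedRing A]

local notation "𝔣" => (fun t : ℝ => 1 - Real.sqrt (1 - t))

lemma stmt7_qcS (h : ℕ → A) (hh : ∀ n, 0 ≤ h n ∧ ‖h n‖ ≤ 1) (b : A)
    (hqc : Tendsto (fun n => ‖h n * b - b * h n‖) atTop (nhds 0)) :
    Tendsto (fun n => ‖cfcₙ 𝔣 (h n) * b - b * cfcₙ 𝔣 (h n)‖) atTop (nhds 0) := by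
  have hf : Continuous 𝔣 := continuous_const.sub (Real.continuous_sqrt.comp (by continuity))
  have hqc' : Tendsto (fun n => ‖(h n : Unitization ℂ A) * (b : Unitization ℂ A)
      - (b : Unitization ℂ A) * (h n : Unitization ℂ A)‖) atTop (nhds 0) := by
    have : ∀ n, ‖(h n : Unitization ℂ A) * (b : Unitization ℂ A)
        - (b : Unitization ℂ A) * (h n : Unitization ℂ A)‖ = ‖h n * b - b * h n‖ := fun n => by
      rw [← Unitization.inr_mul, ← Unitization.inr_mul, ← Unitization.inr_sub,
        Unitization.norm_inr]
    simpa only [this] using hqc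
  have := stmt7_qc_cfc (B := Unitization ℂ A) 𝔣 hf (fun n => (h n : Unitization ℂ A))
    (fun n => .of_nonneg (Unitization.inr_nonneg_iff.mpr (hh n).1))
    (fun n => stmt7_spec01 (h n) (hh n).1 (hh n).2)
    (fun n => by rw [Unitization.norm_inr]; exact (hh n).2)
    (b : Unitization ℂ A) hqc'
  have heq : ∀ n, ‖cfc 𝔣 ((h n : Unitization ℂ A)) * (b : Unitization ℂ A)
      - (b : Unitization ℂ A) * cfc 𝔣 ((h n : Unitization ℂ A))‖
      = ‖cfcₙ 𝔣 (h n) * b - b * cfcₙ 𝔣 (h n)‖ := fun n => by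
    rw [← Unitization.real_cfcₙ_eq_cfc_inr _ _ (by simp), ← Unitization.inr_mul,
      ← Unitization.inr_mul, ← Unitization.inr_sub, Unitization.norm_inr]
  simpa only [heq] using this

end Main

/-- Combining a quasicentral approximate unit of an ideal `J ⊆ A` with a lift of an
approximate unit of `A/J` produces an approximate unit of `A`: for a suitable subsequence
`n₁ < n₂ < …`, the elements `e_k = h_{n_k} + (1 - h_{n_k})^{1/2} a_k (1 - h_{n_k})^{1/2}`,
written out in `A` via the non-unital continuous functional calculus element
`s_k = f(h_{n_k})` with `f t = 1 - √(1 - t)`, form an approximate unit for `A`. -/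
theorem stmt7 {A : Type*} [NonUnitalCStarAlgebra A] [PartialOrder A] [StarOrderedRing A]
    (hσunital : ∃ u : ℕ → A, (∀ m, 0 ≤ u m ∧ ‖u m‖ ≤ 1) ∧
      ∀ a : A, Filter.Tendsto (fun m => ‖a - u m * a‖) Filter.atTop (nhds 0))
    (J : TwoSidedIdeal A) (hJclosed : IsClosed (J : Set A))
    (h : ℕ → A) (hhJ : ∀ n, h n ∈ J ∧ 0 ≤ h n ∧ ‖h n‖ ≤ 1)
    (happrox : ∀ x ∈ J, Filter.Tendsto (fun n => ‖x - h n * x‖) Filter.atTop (nhds 0))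
    (hqc : ∀ a : A, Filter.Tendsto (fun n => ‖h n * a - a * h n‖) Filter.atTop (nhds 0))
    (a : ℕ → A) (ha : ∀ n, 0 ≤ a n ∧ ‖a n‖ ≤ 1)
    (haJ : ∀ b : A, Filter.Tendsto (fun n => Metric.infDist (b - a n * b) (J : Set A))
      Filter.atTop (nhds 0)) :
    ∃ n : ℕ → ℕ, StrictMono n ∧
      ∀ b : A, Filter.Tendsto (fun k =>
        ‖b - (h (n k) + a k
            - cfcₙ (fun t : ℝ => 1 - Real.sqrt (1 - t)) (h (n k)) * a k
            - a k * cfcₙ (fun t : ℝ => 1 - Real.sqrt (1 - t)) (h (n k))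
            + cfcₙ (fun t : ℝ => 1 - Real.sqrt (1 - t)) (h (n k)) * a k
              * cfcₙ (fun t : ℝ => 1 - Real.sqrt (1 - t)) (h (n k))) * b‖)
        Filter.atTop (nhds 0) := by
  obtain ⟨u, hu, huapp⟩ := hσunital
  set s : ℕ → A := fun n => cfcₙ (fun t : ℝ => 1 - Real.sqrt (1 - t)) (h n) with hsdef
  set E : ℕ → ℕ → A := fun n k => h n + a k - s n * a k - a k * s n + s n * a k * s n with hEdef
  -- J is star-closed
  have hJstar : ∀ x, x ∈ J → star x ∈ J := by
    intro x hx
    have h1 : Tendsto (fun n => h n * x) atTop (nhds x) := by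
      rw [tendsto_iff_norm_sub_tendsto_zero]
      simpa only [norm_sub_rev] using happrox x hx
    have h2 : Tendsto (fun n => star (h n * x)) atTop (nhds (star x)) := h1.star
    have h3 : ∀ n, star (h n * x) ∈ (J : Set A) := by
      intro n
      have hsa : star (h n * x) = star x * h n := by
        rw [star_mul, (IsSelfAdjoint.of_nonneg (hhJ n).2.1).star_eq]
      rw [hsa]
      exact SetLike.mem_coe.mpr (J.mul_mem_left (star x) (h n) (hhJ n).1)
    exact hJclosed.mem_of_tendsto h2 (Filter.Eventually.of_forall h3)
  have hJright : ∀ j, j ∈ J → Tendsto (fun n => ‖j - j * h n‖) atTop (nhds 0) := by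
    intro j hj
    have := happrox (star j) (hJstar j hj)
    have heq : ∀ n, ‖star j - h n * star j‖ = ‖j - j * h n‖ := by
      intro n
      rw [← norm_star, star_sub, star_star, star_mul, star_star,
        (IsSelfAdjoint.of_nonneg (hhJ n).2.1).star_eq]
    simpa only [heq] using this
  -- key pointwise claim
  have claim1 : ∀ k m : ℕ, ∀ ε : ℝ, 0 < ε → ∀ᶠ n in atTop,
      ‖u m - E n k * u m‖ < Metric.infDist (u m - a k * u m) (J : Set A) + ε := by
    intro k m ε hε
    have hJne : (J : Set A).Nonempty := ⟨0, J.zero_mem⟩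
    have hlt : Metric.infDist (u m - a k * u m) (J : Set A)
        < Metric.infDist (u m - a k * u m) (J : Set A) + ε/3 := by linarith
    obtain ⟨j, hjJ, hjd⟩ := (Metric.infDist_lt_iff hJne).mp hlt
    rw [dist_eq_norm] at hjd
    have hsqrt : Tendsto (fun n => Real.sqrt (‖j - j * h n‖ * ‖j‖)) atTop (nhds 0) := by
      have h0 : Tendsto (fun n => ‖j - j * h n‖ * ‖j‖) atTop (nhds 0) := by
        simpa using (hJright j hjJ).mul_const ‖j‖
      have h1 := (Real.continuous_sqrt.tendsto 0).comp h0
      rw [Real.sqrt_zero] at h1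
      exact h1
    have hcomm : Tendsto (fun n => ‖s n * u m - u m * s n‖) atTop (nhds 0) :=
      stmt7_qcS h (fun n => ⟨(hhJ n).2.1, (hhJ n).2.2⟩) (u m) (hqc (u m))
    filter_upwards [hsqrt.eventually_lt_const (show (0:ℝ) < ε/3 by linarith),
      hcomm.eventually_lt_const (show (0:ℝ) < ε/3 by linarith)] with n h2 h3
    have hest := stmt7_est1 (h n) (a k) (u m) j (hhJ n).2.1 (hhJ n).2.2 (ha k).1 (ha k).2
    calc ‖u m - E n k * u m‖ ≤ ‖(u m - a k * u m) - j‖ + Real.sqrt (‖j - j * h n‖ * ‖j‖)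
        + ‖s n * u m - u m * s n‖ := hest
    _ < (Metric.infDist (u m - a k * u m) (J : Set A) + ε/3) + ε/3 + ε/3 := by
        exact add_lt_add (add_lt_add hjd h2) h3
    _ = Metric.infDist (u m - a k * u m) (J : Set A) + ε := by ring
  have claim2 : ∀ k : ℕ, ∀ᶠ n in atTop, ∀ m, m ≤ k →
      ‖u m - E n k * u m‖ < Metric.infDist (u m - a k * u m) (J : Set A) + 1/(k+1) := by
    intro k
    have hev : ∀ m ∈ Finset.range (k+1), ∀ᶠ n in atTop,
        ‖u m - E n k * u m‖ < Metric.infDist (u m - a k * u m) (J : Set A) + 1/(k+1) := by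
      intro m _
      exact claim1 k m (1/(k+1)) (by positivity)
    have := (Filter.eventually_all_finset (Finset.range (k+1))).mpr hev
    filter_upwards [this] with n hn m hm
    exact hn m (Finset.mem_range.mpr (Nat.lt_succ_of_le hm))
  obtain ⟨φ, hφmono, hφ⟩ := Filter.extraction_forall_of_eventually claim2
  refine ⟨φ, hφmono, ?_⟩
  intro b
  have goal_eq : ∀ k : ℕ, ‖b - (h (φ k) + a k
      - cfcₙ (fun t : ℝ => 1 - Real.sqrt (1 - t)) (h (φ k)) * a k
      - a k * cfcₙ (fun t : ℝ => 1 - Real.sqrt (1 - t)) (h (φ k))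
      + cfcₙ (fun t : ℝ => 1 - Real.sqrt (1 - t)) (h (φ k)) * a k
        * cfcₙ (fun t : ℝ => 1 - Real.sqrt (1 - t)) (h (φ k))) * b‖ = ‖b - E (φ k) k * b‖ :=
    fun k => rfl
  simp only [goal_eq]
  rw [Metric.tendsto_nhds]
  intro ε hε
  obtain ⟨m, hm⟩ := ((huapp b).eventually_lt_const (show (0:ℝ) < ε/2 by linarith)).exists
  have hD : Tendsto (fun k => Metric.infDist (u m - a k * u m) (J : Set A)) atTop (nhds 0) :=
    haJ (u m)
  have h1k : Tendsto (fun k : ℕ => (1:ℝ)/(k+1)) atTop (nhds 0) :=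
    tendsto_one_div_add_atTop_nhds_zero_nat
  have hsum : Tendsto (fun k => (Metric.infDist (u m - a k * u m) (J : Set A) + 1/(k+1)) * ‖b‖)
      atTop (nhds 0) := by
    simpa using (hD.add h1k).mul_const ‖b‖
  filter_upwards [hsum.eventually_lt_const (show (0:ℝ) < ε/2 by linarith),
    eventually_ge_atTop m] with k h2 hk
  rw [Real.dist_eq, sub_zero, abs_of_nonneg (norm_nonneg _)]
  have hest := stmt7_est2 (h (φ k)) (a k) b (u m) (hhJ (φ k)).2.1 (hhJ (φ k)).2.2
    (ha k).1 (ha k).2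
  have t2 : ‖u m - E (φ k) k * u m‖ * ‖b‖
      ≤ (Metric.infDist (u m - a k * u m) (J : Set A) + 1/(k+1)) * ‖b‖ :=
    mul_le_mul_of_nonneg_right (hφ k m hk).le (norm_nonneg b)
  calc ‖b - E (φ k) k * b‖ ≤ ‖b - u m * b‖ + ‖u m - E (φ k) k * u m‖ * ‖b‖ := hest
  _ < ε := by linarith
end

section
/- Let G be a second-countable, locally compact group, A a unital C*-algebra, α a continuous action of G on A by *-automorphisms, ε > 0, and K ⊆ G a compact set. Let (u_n)_n be a sequence of unitaries in A, and suppose there exist norm-continuous paths w_n : [0,1] → U(A) with w_n(0) = 1 such that ‖w_n(1) − u_n‖ → 0 as n → ∞, the family of maps (t,g) ↦ α_g(w_n(t)) from [0,1] × G to A, indexed by n ∈ ℕ, is equicontinuous, and limsup_{n→∞} ‖α_g(w_n(t)) − w_n(t)‖ ≤ ε for every t ∈ [0,1] and g ∈ K. Then there exists a sequence δ_n of nonnegative reals with δ_n → 0 such that for all sufficiently large n one has u_n ∈ U₀(A^α_{ε+δ_n,K}), i.e., there is a norm-continuous path v_n : [0,1] → U(A) with v_n(0) = 1, v_n(1) =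 u_n, and ‖α_g(v_n(t)) − v_n(t)‖ ≤ ε + δ_n for all t ∈ [0,1] and g ∈ K. -/
open Filter Topology

open Pointwise


lemma norm_exp_mul_I_sub_one_sq (x : ℝ) :
    ‖Complex.exp ((x:ℂ) * Complex.I) - 1‖ ^ 2 = 2 - 2 * Real.cos x := by
  rw [Complex.sq_norm, Complex.normSq_apply]
  simp only [Complex.sub_re, Complex.sub_im, Complex.one_re, Complex.one_im,
    Complex.exp_ofReal_mul_I_re, Complex.exp_ofReal_mul_I_im]
  nlinarith [Real.sin_sq_add_cos_sq x]

lemma norm_exp_smul_I_sub_one_le {θ s : ℝ} (hs0 : 0 ≤ s) (hs1 : s ≤ 1) (hθ : |θ| ≤ Real.pi) :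
    ‖Complex.exp (((s * θ : ℝ) : ℂ) * Complex.I) - 1‖ ≤
      ‖Complex.exp ((θ : ℂ) * Complex.I) - 1‖ := by
  have h1 : |s * θ| ≤ |θ| := by
    rw [abs_mul]
    calc |s| * |θ| ≤ 1 * |θ| := by
          apply mul_le_mul_of_nonneg_right _ (abs_nonneg θ)
          rwa [abs_of_nonneg hs0]
      _ = |θ| := one_mul _
  have hcos : Real.cos θ ≤ Real.cos (s * θ) := by
    have := Real.cos_le_cos_of_nonneg_of_le_pi (abs_nonneg (s * θ)) hθ h1
    rwa [Real.cos_abs, Real.cos_abs] at this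
  have h2 : ‖Complex.exp (((s * θ : ℝ) : ℂ) * Complex.I) - 1‖ ^ 2 ≤
      ‖Complex.exp ((θ : ℂ) * Complex.I) - 1‖ ^ 2 := by
    rw [norm_exp_mul_I_sub_one_sq, show ((θ:ℂ) * Complex.I) = (((θ:ℝ):ℂ) * Complex.I) by norm_num,
      norm_exp_mul_I_sub_one_sq]
    linarith
  calc ‖Complex.exp (((s * θ : ℝ) : ℂ) * Complex.I) - 1‖
      = Real.sqrt (‖Complex.exp (((s * θ : ℝ) : ℂ) * Complex.I) - 1‖ ^ 2) :=
        (Real.sqrt_sq (norm_nonneg _)).symm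
    _ ≤ Real.sqrt (‖Complex.exp ((θ : ℂ) * Complex.I) - 1‖ ^ 2) := Real.sqrt_le_sqrt h2
    _ = ‖Complex.exp ((θ : ℂ) * Complex.I) - 1‖ := Real.sqrt_sq (norm_nonneg _)

section
variable {A : Type*} [CStarAlgebra A] [Nontrivial A]

lemma unitary_path {c : A} (hc : c ∈ unitary A) (hc2 : ‖c - 1‖ < 2) :
    ∃ e : ℝ → A, Continuous e ∧ e 0 = 1 ∧ e 1 = c ∧ (∀ s, e s ∈ unitary A) ∧
      ∀ s ∈ Set.Icc (0:ℝ) 1, ‖e s - 1‖ ≤ ‖c - 1‖ := by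
  have hnormal : IsStarNormal c := isStarNormal_of_mem_unitary hc
  have hspec1 : ∀ z ∈ spectrum ℂ c, ‖z‖ = 1 := by
    intro z hz
    have := spectrum.subset_circle_of_unitary hc hz
    simpa using this
  have hspecle : ∀ z ∈ spectrum ℂ c, ‖z - 1‖ ≤ ‖c - 1‖ := by
    intro z hz
    have hz1 : z - 1 ∈ spectrum ℂ (c - 1) := by
      have h0 : z - 1 ∈ spectrum ℂ c - ({1} : Set ℂ) :=
        Set.sub_mem_sub hz (Set.mem_singleton 1)
      rwa [spectrum.sub_singleton_eq, map_one] at h0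
    exact spectrum.norm_le_norm_of_mem hz1
  have hzexp : ∀ z ∈ spectrum ℂ c,
      Complex.exp ((Complex.arg z : ℂ) * Complex.I) = z := by
    intro z hz
    have h := Complex.norm_mul_exp_arg_mul_I z
    rwa [hspec1 z hz, Complex.ofReal_one, one_mul] at h
  have hslit : ∀ z ∈ spectrum ℂ c, z ∈ Complex.slitPlane := by
    intro z hz
    rw [Complex.mem_slitPlane_iff]
    by_cases him : z.im = 0
    · left
      have habs : ‖z‖ = 1 := hspec1 z hz
      have hzre : z = (z.re : ℂ) := Complex.ext rfl (by simp [him])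
      rw [hzre, Complex.norm_real, Real.norm_eq_abs] at habs
      rcases abs_eq (by norm_num : (0:ℝ) ≤ 1) |>.mp habs with h | h
      · rw [h]; norm_num
      · exfalso
        have h2 : ‖z - 1‖ ≤ ‖c - 1‖ := hspecle z hz
        rw [hzre, h, show ((-1 : ℝ) : ℂ) - 1 = -2 by norm_num] at h2
        rw [norm_neg] at h2
        have h3 : ‖(2 : ℂ)‖ = 2 := by norm_num
        rw [h3] at h2
        linarith
    · right; exact him
  have harg : ContinuousOn (fun z : ℂ => (Complex.arg z : ℂ)) (spectrum ℂ c) := fun z hz =>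
    (Complex.continuous_ofReal.continuousAt.comp
      (Complex.continuousAt_arg (hslit z hz))).continuousWithinAt
  set f : ℝ → ℂ → ℂ := fun s z => Complex.exp ((s : ℂ) * ((Complex.arg z : ℂ) * Complex.I))
    with hfdef
  have hfs : ∀ s : ℝ, ContinuousOn (f s) (spectrum ℂ c) := fun s =>
    Complex.continuous_exp.comp_continuousOn
      (continuousOn_const.mul (harg.mul continuousOn_const))
  refine ⟨fun s => cfc (f s) c, ?_, ?_, ?_, ?_, ?_⟩
  · -- continuity
    set b : A := cfc (fun z : ℂ => (Complex.arg z : ℂ) * Complex.I) c with hb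
    have hkey : ∀ s : ℝ, cfc (f s) c = NormedSpace.exp (s • b) := by
      intro s
      have hsmul : s • b = cfc (fun z : ℂ => s • ((Complex.arg z : ℂ) * Complex.I)) c :=
        (cfc_smul s _ c (harg.mul continuousOn_const)).symm
      have hnorm2 : IsStarNormal (s • b) := by
        rw [hsmul]; exact cfc_predicate _ c
      rw [← CFC.complex_exp_eq_normedSpace_exp, hsmul,
        ← cfc_comp' Complex.exp (fun z : ℂ => s • ((Complex.arg z : ℂ) * Complex.I)) c Complex.continuous_exp.continuousOn
          ((harg.mul continuousOn_const).const_smul s)]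
      apply cfc_congr
      intro z _
      simp only [Function.comp_apply, hfdef, Complex.real_smul]
    have heq : (fun s : ℝ => cfc (f s) c) = fun s : ℝ => NormedSpace.exp (s • b) :=
      funext hkey
    rw [heq]
    let +nondep : NormedAlgebra ℚ A := .restrictScalars ℚ ℂ A
    exact NormedSpace.exp_continuous.comp (continuous_id.smul continuous_const)
  · -- e 0 = 1
    show cfc (f 0) c = 1
    have h0 : f 0 = fun _ : ℂ => 1 := by
      funext z; simp [hfdef]
    rw [h0, cfc_const_one ℂ c]
  · -- e 1 = c
    show cfc (f 1) c = c
    have h1 : cfc (f 1) c = cfc (id : ℂ → ℂ) c := by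
      apply cfc_congr
      intro z hz
      simp only [hfdef, Complex.ofReal_one, one_mul, id_eq]
      exact hzexp z hz
    rw [h1, cfc_id ℂ c]
  · -- unitarity
    intro s
    rw [cfc_unitary_iff (f s) c hnormal (hfs s)]
    intro z _
    rw [RCLike.star_def, ← Complex.exp_conj, ← Complex.exp_add]
    rw [show (starRingEnd ℂ) ((s:ℂ) * ((Complex.arg z : ℂ) * Complex.I)) +
        (s:ℂ) * ((Complex.arg z : ℂ) * Complex.I) = 0 by
      simp [map_mul, Complex.conj_ofReal, Complex.conj_I]]
    exact Complex.exp_zero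
  · -- norm bound
    intro s hs
    show ‖cfc (f s) c - 1‖ ≤ ‖c - 1‖
    have hsub : cfc (f s) c - 1 = cfc (fun z => f s z - 1) c := by
      rw [cfc_sub (f s) (fun _ => 1) c (hfs s) continuousOn_const, cfc_const_one ℂ c]
    rw [hsub]
    apply norm_cfc_le (norm_nonneg _)
    intro z hz
    have harg_le : |Complex.arg z| ≤ Real.pi := Complex.abs_arg_le_pi z
    have hrw : (s:ℂ) * ((Complex.arg z : ℂ) * Complex.I)
        = ((s * Complex.arg z : ℝ) : ℂ) * Complex.I := by push_cast; ring
    calc ‖f s z - 1‖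
        = ‖Complex.exp (((s * Complex.arg z : ℝ) : ℂ) * Complex.I) - 1‖ := by
          rw [hfdef]; simp only []; rw [hrw]
      _ ≤ ‖Complex.exp ((Complex.arg z : ℂ) * Complex.I) - 1‖ :=
          norm_exp_smul_I_sub_one_le hs.1 hs.2 harg_le
      _ = ‖z - 1‖ := by rw [hzexp z hz]
      _ ≤ ‖c - 1‖ := hspecle z hz

end



/-- Sequences of unitaries approximately reached by unitary paths starting at `1` whose
`α`-oscillation over `K` is asymptotically at most `ε` lie, for large `n`, in
`U₀(A^α_{ε+δ_n,K})` for some sequence `δ_n → 0`. -/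
theorem stmt9 {G A : Type*} [Group G] [TopologicalSpace G] [IsTopologicalGroup G]
    [SecondCountableTopology G] [LocallyCompactSpace G]
    [CStarAlgebra A]
    (α : G → A ≃⋆ₐ[ℂ] A)
    (hmul : ∀ g h : G, α (g * h) = (α h).trans (α g))
    (hcont : ∀ a : A, Continuous fun g => α g a)
    (ε : ℝ) (hε : 0 < ε) (K : Set G) (hK : IsCompact K)
    (u : ℕ → A) (hu : ∀ n, u n ∈ unitary A)
    (w : ℕ → ℝ → A)
    (hwcont : ∀ n, ContinuousOn (w n) (Set.Icc 0 1))
    (hwuni : ∀ n, ∀ t ∈ Set.Icc (0:ℝ) 1, w n t ∈ unitary A)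
    (hw0 : ∀ n, w n 0 = 1)
    (hw1 : Filter.Tendsto (fun n => ‖w n 1 - u n‖) Filter.atTop (nhds 0))
    (hequi : Equicontinuous fun n => fun p : Set.Icc (0:ℝ) 1 × G => α p.2 (w n p.1))
    (hpt : ∀ t ∈ Set.Icc (0:ℝ) 1, ∀ g ∈ K,
      Filter.limsup (fun n => ‖α g (w n t) - w n t‖) Filter.atTop ≤ ε) :
    ∃ δ : ℕ → ℝ, (∀ n, 0 ≤ δ n) ∧ Filter.Tendsto δ Filter.atTop (nhds 0) ∧
      ∀ᶠ n in Filter.atTop, UZero α (ε + δ n) K (u n) := by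
  rcases subsingleton_or_nontrivial A with hA | hA
  · refine ⟨fun _ => 0, fun _ => le_rfl, tendsto_const_nhds,
      Filter.Eventually.of_forall fun n => ?_⟩
    refine ⟨fun _ => 1, continuousOn_const, rfl, Subsingleton.elim _ _,
      fun t _ => one_mem _, fun t _ g _ => ?_⟩
    rw [map_one, sub_self, norm_zero]
    simpa using hε.le
  -- nontrivial case
  have halpha1 : ∀ a : A, α 1 a = a := by
    intro a
    have h2 : α (1*1) a = α 1 (α 1 a) := by rw [hmul]; rfl
    rw [one_mul] at h2
    exact (α 1).injective h2.symm
  have hiso : ∀ (g : G) (a : A), ‖α g a‖ = ‖a‖ := fun g a => StarAlgEquiv.norm_map (α g) a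
  set D : ℕ → Set.Icc (0:ℝ) 1 × G → ℝ :=
    fun n p => ‖α p.2 (w n ↑p.1) - w n ↑p.1‖ with hD
  have hD2 : ∀ n p, D n p ≤ 2 := by
    intro n p
    have h1 : ‖w n ↑p.1‖ = 1 := CStarRing.norm_of_mem_unitary (hwuni n ↑p.1 p.1.2)
    calc D n p ≤ ‖α p.2 (w n ↑p.1)‖ + ‖w n ↑p.1‖ := norm_sub_le _ _
      _ = 1 + 1 := by rw [hiso, h1]
      _ = 2 := by norm_num
  set S : Set (Set.Icc (0:ℝ) 1 × G) := Set.univ ×ˢ K with hS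
  have hScomp : IsCompact S := isCompact_univ.prod hK
  have hbdd : ∀ n, BddAbove (Set.range fun p : S => D n ↑p) := fun n =>
    ⟨2, by rintro x ⟨p, rfl⟩; exact hD2 n ↑p⟩
  set M : ℕ → ℝ := fun n => ⨆ p : S, D n ↑p with hM
  have hMle : ∀ (n : ℕ) (t : ℝ), t ∈ Set.Icc (0:ℝ) 1 → ∀ g ∈ K,
      ‖α g (w n t) - w n t‖ ≤ M n := by
    intro n t ht g hg
    exact le_ciSup (hbdd n) (⟨(⟨t, ht⟩, g), Set.mem_prod.mpr ⟨Set.mem_univ _, hg⟩⟩ : S)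
  have key : ∀ η : ℝ, 0 < η → ∀ᶠ n in atTop,
      ∀ p : Set.Icc (0:ℝ) 1 × G, p ∈ S → D n p ≤ ε + η := by
    intro η hη
    have hU : {x : A × A | dist x.1 x.2 < η/4} ∈ uniformity A :=
      Metric.dist_mem_uniformity (by positivity)
    have hnb : ∀ q : Set.Icc (0:ℝ) 1 × G,
        ∀ᶠ p in nhds q, ∀ n, D n p ≤ D n q + η/2 := by
      intro q
      have h1 := hequi q _ hU
      have hcψ : Continuous
          (fun p : Set.Icc (0:ℝ) 1 × G => ((p.1, (1:G)) : Set.Icc (0:ℝ) 1 × G)) :=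
        continuous_fst.prodMk continuous_const
      have h2' := hequi (q.1, (1:G)) _ hU
      have h2 := (hcψ.tendsto q).eventually h2'
      filter_upwards [h1, h2] with p hp1 hp2 n
      have hd1 : dist (α q.2 (w n ↑q.1)) (α p.2 (w n ↑p.1)) < η/4 := hp1 n
      have hd2 : dist (α (1:G) (w n ↑q.1)) (α (1:G) (w n ↑p.1)) < η/4 := hp2 n
      rw [dist_eq_norm] at hd1 hd2
      rw [halpha1, halpha1] at hd2
      have key_eq : α p.2 (w n ↑p.1) - w n ↑p.1 =
          (α q.2 (w n ↑q.1) - w n ↑q.1) + -(α q.2 (w n ↑q.1) - α p.2 (w n ↑p.1))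
            + (w n ↑q.1 - w n ↑p.1) := by abel
      have hle : D n p ≤ D n q + ‖α q.2 (w n ↑q.1) - α p.2 (w n ↑p.1)‖
          + ‖w n ↑q.1 - w n ↑p.1‖ := by
        calc D n p = ‖(α q.2 (w n ↑q.1) - w n ↑q.1) + -(α q.2 (w n ↑q.1) - α p.2 (w n ↑p.1))
            + (w n ↑q.1 - w n ↑p.1)‖ := by simp only [hD]; rw [key_eq]
          _ ≤ ‖α q.2 (w n ↑q.1) - w n ↑q.1‖ + ‖-(α q.2 (w n ↑q.1) - α p.2 (w n ↑p.1))‖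
              + ‖w n ↑q.1 - w n ↑p.1‖ := norm_add₃_le
          _ = D n q + ‖α q.2 (w n ↑q.1) - α p.2 (w n ↑p.1)‖ + ‖w n ↑q.1 - w n ↑p.1‖ := by
              rw [norm_neg]
      linarith
    obtain ⟨T, hT⟩ := hScomp.elim_nhds_subcover'
      (fun q _ => {p | ∀ n, D n p ≤ D n q + η/2}) (fun q hq => hnb q)
    have hev : ∀ᶠ n in atTop, ∀ q ∈ T, D n ↑q ≤ ε + η/2 := by
      rw [Filter.eventually_all_finset]
      intro q hq
      have hgK : (↑q : Set.Icc (0:ℝ) 1 × G).2 ∈ K := q.2.2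
      have hlim := hpt ((↑q : Set.Icc (0:ℝ) 1 × G).1 : ℝ)
        (↑q : Set.Icc (0:ℝ) 1 × G).1.2 (↑q : Set.Icc (0:ℝ) 1 × G).2 hgK
      have hb : Filter.IsBoundedUnder (· ≤ ·) atTop (fun n => D n ↑q) :=
        Filter.isBoundedUnder_of ⟨2, fun n => hD2 n ↑q⟩
      have hlt : Filter.limsup (fun n => D n ↑q) atTop < ε + η/2 :=
        lt_of_le_of_lt hlim (by linarith)
      exact (Filter.eventually_lt_of_limsup_lt hlt hb).mono fun n hn => hn.le
    filter_upwards [hev] with n hn p hp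
    have hp' := hT hp
    simp only [Set.mem_iUnion] at hp'
    obtain ⟨q, hqT, hpq⟩ := hp'
    have h1 := hpq n
    have h2 := hn q hqT
    linarith
  have hMev : ∀ η : ℝ, 0 < η → ∀ᶠ n in atTop, M n ≤ ε + η := by
    intro η hη
    filter_upwards [key η hη] with n hn
    exact Real.iSup_le (fun p => hn ↑p p.2) (by positivity)
  set δ : ℕ → ℝ := fun n => max (M n - ε) 0 + 2 * ‖w n 1 - u n‖ with hδ
  refine ⟨δ, ?_, ?_, ?_⟩
  · intro n
    exact add_nonneg (le_max_right _ _) (by positivity)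
  · have t1 : Tendsto (fun n => max (M n - ε) 0) atTop (nhds 0) := by
      rw [Metric.tendsto_nhds]
      intro η hη
      filter_upwards [hMev (η/2) (by positivity)] with n hn
      rw [Real.dist_0_eq_abs, abs_of_nonneg (le_max_right _ _)]
      have hmax : max (M n - ε) 0 ≤ η/2 := max_le (by linarith) (by positivity)
      linarith
    have t2 : Tendsto (fun n => 2 * ‖w n 1 - u n‖) atTop (nhds 0) := by
      simpa using hw1.const_mul 2
    simpa using t1.add t2
  · have hsmall : ∀ᶠ n in atTop, ‖w n 1 - u n‖ < 1 := hw1.eventually_lt_const zero_lt_one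
    filter_upwards [hsmall] with n hsm
    have h1mem : (1:ℝ) ∈ Set.Icc (0:ℝ) 1 := ⟨zero_le_one, le_refl 1⟩
    have hw1U : w n 1 ∈ unitary A := hwuni n 1 h1mem
    set c : A := star (w n 1) * u n with hc
    have hcu : c ∈ unitary A := mul_mem (Unitary.star_mem hw1U) (hu n)
    have hc1 : ‖c - 1‖ = ‖w n 1 - u n‖ := by
      have hcc : c - 1 = star (w n 1) * (u n - w n 1) := by
        calc c - 1 = star (w n 1) * u n - star (w n 1) * w n 1 := by
              rw [(Unitary.mem_iff.mp hw1U).1]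
          _ = star (w n 1) * (u n - w n 1) := (mul_sub _ _ _).symm
      rw [hcc, CStarRing.norm_mem_unitary_mul _ (Unitary.star_mem hw1U), norm_sub_rev]
    have hc2 : ‖c - 1‖ < 2 := by rw [hc1]; linarith
    obtain ⟨e, hec, he0, he1, heU, hebd⟩ := unitary_path hcu hc2
    set v : ℝ → A := fun t => if t ≤ 1/2 then w n (2*t) else w n 1 * e (2*t - 1) with hv
    have hMδ : M n ≤ ε + max (M n - ε) 0 := by
      have := le_max_left (M n - ε) 0; linarith
    refine ⟨v, ?_, ?_, ?_, ?_, ?_⟩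
    · -- continuity
      have hg2 : Continuous (fun t : ℝ => w n 1 * e (2*t - 1)) :=
        continuous_const.mul (hec.comp ((continuous_const.mul continuous_id).sub continuous_const))
      have hcw : ContinuousOn (fun t : ℝ => w n (2*t)) (Set.Icc 0 (1/2)) := by
        refine (hwcont n).comp (continuous_const.mul continuous_id).continuousOn ?_
        intro x hx
        exact ⟨by simpa using (by linarith [hx.1] : (0:ℝ) ≤ 2*x),
          by simpa using (by linarith [hx.2] : 2*x ≤ 1)⟩
      have hOn1 : ContinuousOn v (Set.Icc (0:ℝ) (1/2)) :=
        hcw.congr fun x hx => if_pos hx.2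
      have hOn2 : ContinuousOn v (Set.Icc (1/2:ℝ) 1) := by
        refine hg2.continuousOn.congr ?_
        intro x hx
        by_cases hhalf : x ≤ 1/2
        · have hx2 : x = 1/2 := le_antisymm hhalf hx.1
          subst hx2
          rw [hv]
          simp only [if_pos le_rfl]
          norm_num [he0]
        · rw [hv]; simp only [if_neg hhalf]
      intro x hx
      have cw1 : ContinuousWithinAt v (Set.Icc (0:ℝ) (1/2)) x := by
        by_cases h : x ∈ Set.Icc (0:ℝ) (1/2)
        · exact hOn1 x h
        · exact continuousWithinAt_of_notMem_closure (by rwa [isClosed_Icc.closure_eq])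
      have cw2 : ContinuousWithinAt v (Set.Icc (1/2:ℝ) 1) x := by
        by_cases h : x ∈ Set.Icc (1/2:ℝ) 1
        · exact hOn2 x h
        · exact continuousWithinAt_of_notMem_closure (by rwa [isClosed_Icc.closure_eq])
      exact (cw1.union cw2).mono
        (Set.Icc_union_Icc_eq_Icc (by norm_num) (by norm_num)).symm.subset
    · rw [hv]
      simp only [if_pos (by norm_num : (0:ℝ) ≤ 1/2)]
      rw [mul_zero, hw0 n]
    · rw [hv]
      simp only [if_neg (by norm_num : ¬ (1:ℝ) ≤ 1/2)]
      rw [show (2*(1:ℝ) - 1) = 1 by norm_num, he1, hc,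
        ← mul_assoc, (Unitary.mem_iff.mp hw1U).2, one_mul]
    · intro t ht
      rw [hv]
      by_cases h : t ≤ 1/2
      · simp only [if_pos h]
        exact hwuni n (2*t) ⟨by linarith [ht.1], by linarith⟩
      · simp only [if_neg h]
        exact mul_mem hw1U (heU _)
    · intro t ht g hg
      by_cases h : t ≤ 1/2
      · simp only [hv, if_pos h]
        have hb := hMle n (2*t) ⟨by linarith [ht.1], by linarith⟩ g hg
        have hn0 : (0:ℝ) ≤ 2 * ‖w n 1 - u n‖ := by positivity
        calc ‖α g (w n (2*t)) - w n (2*t)‖ ≤ M n := hb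
          _ ≤ ε + δ n := by rw [hδ]; simp only []; linarith
      · simp only [hv, if_neg h]
        set s : ℝ := 2*t - 1 with hs
        have hsI : s ∈ Set.Icc (0:ℝ) 1 :=
          ⟨by have := not_le.mp h; rw [hs]; linarith, by rw [hs]; linarith [ht.2]⟩
        have hαw1 : α g (w n 1) ∈ unitary A := by
          rw [Unitary.mem_iff]
          constructor
          · rw [← map_star, ← map_mul, (Unitary.mem_iff.mp hw1U).1, map_one]
          · rw [← map_star, ← map_mul, (Unitary.mem_iff.mp hw1U).2, map_one]
        have hsplit : α g (w n 1 * e s) - w n 1 * e s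
            = α g (w n 1) * (α g (e s) - e s) + (α g (w n 1) - w n 1) * e s := by
          rw [map_mul, mul_sub, sub_mul]; abel
        have hterm1 : ‖α g (w n 1) * (α g (e s) - e s)‖ ≤ 2 * ‖w n 1 - u n‖ := by
          rw [CStarRing.norm_mem_unitary_mul _ hαw1]
          have hee : α g (e s) - e s = α g (e s - 1) - (e s - 1) := by
            rw [map_sub, map_one]; abel
          rw [hee]
          have hbd := hebd s hsI
          calc ‖α g (e s - 1) - (e s - 1)‖ ≤ ‖α g (e s - 1)‖ + ‖e s - 1‖ := norm_sub_le _ _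
            _ = ‖e s - 1‖ + ‖e s - 1‖ := by rw [hiso]
            _ ≤ ‖c - 1‖ + ‖c - 1‖ := by linarith
            _ = 2 * ‖w n 1 - u n‖ := by rw [hc1]; ring
        have hterm2 : ‖(α g (w n 1) - w n 1) * e s‖ ≤ M n := by
          rw [CStarRing.norm_mul_mem_unitary _ (heU s)]
          exact hMle n 1 h1mem g hg
        calc ‖α g (w n 1 * e s) - w n 1 * e s‖
            ≤ ‖α g (w n 1) * (α g (e s) - e s)‖ + ‖(α g (w n 1) - w n 1) * e s‖ := by
              rw [hsplit]; exact norm_add_le _ _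
          _ ≤ 2 * ‖w n 1 - u n‖ + M n := add_le_add hterm1 hterm2
          _ ≤ ε + δ n := by rw [hδ]; simp only []; linarith
end
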